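/- Let 𝒲 be a finite type, d ≥ 1, P a probability mass function on 𝒲×𝒲 for classical registers (W_A, W'), (ρ^{w_a,w'}) a family of d×d density matrices (the quantum register Y'), and ε ≥ 0. Assume p := Σ_{(w_a,w') : w_a ≠ w'} P(w_a,w') > 0 and that the state conditioned on the event {W_A ≠ W'} is ε-close to Markov: δ(ρ_{W_A W' Y' | W_A ≠ W'}, ρ_{W_A ↔ W' ↔ Y' | W_A ≠ W'}) ≤ ε, where the conditioned cq-state is given by the pmf P_{≠}(w_a,w') := P(w_a,w')·[w_a ≠ w']/p with the same quantum states, and the conditioned Markov state is its Markov state conditioning on the W' coordinate. Define the extended cq-state ρ_{W_A W' Y Y'} over 𝒲×𝒲×{0,1} by adjoining the deterministic register Y := [W_A = W'] (pmf P'(w_a,w',y) := P(w_a,w')·[y = [w_a = w']], quantum states ρ^{w_a,w'}). Then δ(ρ_{W_A W' Y Y'}, ρ_{W_A ↔ (W',Y) ↔ Y'}) ≤ ε, where the Markov state conditions on the (W',Y) coordinates. -/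

import Mathlib

open Matrix Kronecker
open scoped ComplexOrder

/-- Trace distance of two (Hermitian) matrices: half the sum of the absolute
values of the eigenvalues of their difference. -/
noncomputable def traceDist {n : Type*} [Fintype n] [DecidableEq n]
    (A B : Matrix n n ℂ) : ℝ :=
  if h : (A - B).IsHermitian then (1 / 2) * ∑ i, |h.eigenvalues i| else 0

/-- A probability mass function on a finite type. -/
def IsPMF {𝒯 : Type*} [Fintype 𝒯] (P : 𝒯 → ℝ) : Prop :=
  (∀ t, 0 ≤ P t) ∧ ∑ t, P t = 1

/-- A density matrix: positive semidefinite (hence Hermitian) with trace 1. -/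
def IsDensity {d : ℕ} (ρ : Matrix (Fin d) (Fin d) ℂ) : Prop :=
  ρ.PosSemidef ∧ ρ.trace = 1

/-- The block-diagonal density matrix of a cq-state:  ρ = Σ_t P(t)·(E_{t,t} ⊗ ρ^t). -/
noncomputable def cqState {𝒯 : Type*} [Fintype 𝒯] [DecidableEq 𝒯] {d : ℕ}
    (P : 𝒯 → ℝ) (ρ : 𝒯 → Matrix (Fin d) (Fin d) ℂ) :
    Matrix (𝒯 × Fin d) (𝒯 × Fin d) ℂ :=
  ∑ t, (P t : ℂ) • (single t t 1 ⊗ₖ ρ t)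

namespace Stmt12Aux

open Polynomial

theorem charpoly_conj_unitary {n : Type*} [Fintype n] [DecidableEq n]
    (U A : Matrix n n ℂ) (hU : U * star U = 1) :
    (U * A * star U).charpoly = A.charpoly := by
  let f := (C : ℂ →+* ℂ[X]).mapMatrix (m := n)
  have key : charmatrix (U * A * star U) = f U * charmatrix A * f (star U) := by
    unfold charmatrix
    rw [Matrix.mul_sub, Matrix.sub_mul,
      ← (Matrix.scalar_commute (X : ℂ[X]) (fun r => Commute.all _ r) (f U)).eq,
      mul_assoc ((Matrix.scalar n) (X : ℂ[X])), ← _root_.map_mul f, hU, _root_.map_one f,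
      mul_one, ← _root_.map_mul f, ← _root_.map_mul f]
  have hdet : (f U).det * (f (star U)).det = 1 := by
    rw [← det_mul, ← _root_.map_mul f, hU, _root_.map_one f, det_one]
  rw [Matrix.charpoly, key, det_mul, det_mul, mul_right_comm, hdet, one_mul, Matrix.charpoly]

theorem charpoly_diagonal' {n : Type*} [Fintype n] [DecidableEq n] (v : n → ℂ) :
    (Matrix.diagonal v).charpoly = ∏ i, (X - C (v i)) := by
  unfold Matrix.charpoly
  have : charmatrix (diagonal v) = diagonal (fun i => (X : ℂ[X]) - C (v i)) := by
    ext i j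
    by_cases h : i = j
    · subst h; simp
    · simp [h, Matrix.diagonal_apply_ne _ h, charmatrix_apply_ne _ _ _ h]
  rw [this, det_diagonal]

theorem roots_sum {n : Type*} [Fintype n] [DecidableEq n] (v : n → ℂ) (g : ℂ → ℝ) :
    (((∏ i, (X - C (v i))).roots).map g).sum = ∑ i, g (v i) := by
  have h1 : (∏ i, (X - C (v i))) = ((Finset.univ.val.map v).map fun a => X - C a).prod := by
    rw [Finset.prod_eq_multiset_prod, Multiset.map_map]; rfl
  rw [h1, roots_multiset_prod_X_sub_C, Multiset.map_map, ← Finset.sum_eq_multiset_sum]; rfl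

theorem spectral' {n : Type*} [Fintype n] [DecidableEq n] {A : Matrix n n ℂ}
    (hA : A.IsHermitian) :
    A = (hA.eigenvectorUnitary : Matrix n n ℂ) *
        diagonal (fun i => ((hA.eigenvalues i : ℝ) : ℂ)) *
        star (hA.eigenvectorUnitary : Matrix n n ℂ) := by
  convert hA.spectral_theorem using 2
  rfl

theorem sum_abs_eigen {n : Type*} [Fintype n] [DecidableEq n] {A : Matrix n n ℂ}
    (hA : A.IsHermitian) :
    ∑ i, |hA.eigenvalues i| = ((A.charpoly.roots).map fun z => |z.re|).sum := by
  have hU : (hA.eigenvectorUnitary : Matrix n n ℂ) *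
      star (hA.eigenvectorUnitary : Matrix n n ℂ) = 1 :=
    (Matrix.mem_unitaryGroup_iff).mp hA.eigenvectorUnitary.2
  have hc : A.charpoly = ∏ i, (X - C ((hA.eigenvalues i : ℝ) : ℂ)) := by
    conv_lhs => rw [spectral' hA]
    rw [charpoly_conj_unitary _ _ hU, charpoly_diagonal']
  rw [hc, roots_sum]
  simp

theorem cqState_apply {𝒯 : Type*} [Fintype 𝒯] [DecidableEq 𝒯] {d : ℕ}
    (P : 𝒯 → ℝ) (ρ : 𝒯 → Matrix (Fin d) (Fin d) ℂ) (t s : 𝒯) (i j : Fin d) :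
    cqState P ρ (t, i) (s, j) = if t = s then (P t : ℂ) * ρ t i j else 0 := by
  unfold cqState
  rw [Matrix.sum_apply]
  simp only [Matrix.smul_apply, Matrix.kroneckerMap_apply, Matrix.single,
    Matrix.of_apply, smul_eq_mul]
  have key : ∀ u, (P u : ℂ) * ((if u = t ∧ u = s then (1 : ℂ) else 0) * ρ u i j)
      = if u = t then (if t = s then (P t : ℂ) * ρ t i j else 0) else 0 := by
    intro u
    by_cases h1 : u = t
    · subst h1
      by_cases h2 : u = s <;> simp [h2]
    · simp [h1]
  rw [Finset.sum_congr rfl (fun u _ => key u), Finset.sum_ite_eq' Finset.univ t]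
  simp

theorem cqState_sub_apply {𝒯 : Type*} [Fintype 𝒯] [DecidableEq 𝒯] {d : ℕ}
    (P : 𝒯 → ℝ) (ρ σ : 𝒯 → Matrix (Fin d) (Fin d) ℂ) (t s : 𝒯) (i j : Fin d) :
    (cqState P ρ - cqState P σ) (t, i) (s, j)
      = if t = s then (P t : ℂ) * (ρ t i j - σ t i j) else 0 := by
  rw [Matrix.sub_apply, cqState_apply, cqState_apply]
  by_cases h : t = s <;> simp [h]
  ring

theorem cqState_isHermitian {𝒯 : Type*} [Fintype 𝒯] [DecidableEq 𝒯] {d : ℕ}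
    (P : 𝒯 → ℝ) (ρ : 𝒯 → Matrix (Fin d) (Fin d) ℂ)
    (hρ : ∀ t, (ρ t).IsHermitian) : (cqState P ρ).IsHermitian := by
  rw [Matrix.IsHermitian]
  ext ⟨t, i⟩ ⟨s, j⟩
  rw [Matrix.conjTranspose_apply, cqState_apply, cqState_apply]
  by_cases h : t = s
  · subst h
    simp only [if_true, ite_true, if_pos trivial]
    rw [star_mul', Complex.star_def, Complex.conj_ofReal]
    congr 1
    exact (hρ t).apply i j
  · have h' : ¬ s = t := fun hh => h hh.symm
    simp [h, h']

theorem herm_aux {d : ℕ} {ι : Type*} [Fintype ι] (c : ι → ℝ) (r : ℝ)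
    (ρ : ι → Matrix (Fin d) (Fin d) ℂ) (hρ : ∀ i, (ρ i).IsHermitian) :
    (((r : ℂ))⁻¹ • ∑ i, ((c i : ℝ) : ℂ) • ρ i).IsHermitian := by
  rw [Matrix.IsHermitian, Matrix.conjTranspose_smul, Matrix.conjTranspose_sum]
  simp [Matrix.conjTranspose_smul, Complex.star_def, Complex.conj_ofReal,
    fun i => (hρ i).eq]

/-- The reindexing equivalence splitting off the Boolean coordinate. -/
def blockEquiv (γ δ β : Type*) : ((γ × δ) × β) ⊕ ((γ × δ) × β) ≃ (γ × δ × Bool) × β where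
  toFun := Sum.elim (fun x => ((x.1.1, x.1.2, false), x.2)) (fun x => ((x.1.1, x.1.2, true), x.2))
  invFun := fun y =>
    Bool.rec (Sum.inl ((y.1.1, y.1.2.1), y.2)) (Sum.inr ((y.1.1, y.1.2.1), y.2)) y.1.2.2
  left_inv := by rintro (⟨⟨a, c⟩, b⟩ | ⟨⟨a, c⟩, b⟩) <;> rfl
  right_inv := by rintro ⟨⟨a, c, (_ | _)⟩, b⟩ <;> rfl

end Stmt12Aux

open Stmt12Aux Polynomial

/-- Identification, security for Alice: if the state conditioned on the event
{W_A ≠ W'} is ε-close to Markov (conditioning on W'), then the state extended by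
the bit Y = [W_A = W'] is ε-close to Markov (conditioning on (W',Y)). -/
theorem stmt12 {𝒲 : Type*} [Fintype 𝒲] [DecidableEq 𝒲] {d : ℕ} (hd : 1 ≤ d)
    -- classical registers (W_A, W'), quantum register Y'
    (P : 𝒲 × 𝒲 → ℝ) (hP : IsPMF P)
    (ρ : 𝒲 × 𝒲 → Matrix (Fin d) (Fin d) ℂ) (hρ : ∀ t, IsDensity (ρ t))
    (ε : ℝ) (hε : 0 ≤ ε)
    (p : ℝ) (hp : p = ∑ t : 𝒲 × 𝒲, if t.1 = t.2 then 0 else P t) (hp0 : 0 < p)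
    -- the pmf conditioned on the event {W_A ≠ W'}
    (Pne : 𝒲 × 𝒲 → ℝ)
    (hPne : ∀ wa w', Pne (wa, w') = if wa = w' then 0 else P (wa, w') / p)
    -- its conditional averages given W'
    (σne : 𝒲 → Matrix (Fin d) (Fin d) ℂ)
    (hσne : ∀ w', σne w' =
      if 0 < ∑ wa, Pne (wa, w')
      then ((∑ wa, Pne (wa, w') : ℝ) : ℂ)⁻¹ • ∑ wa, (Pne (wa, w') : ℂ) • ρ (wa, w')
      else 0)
    -- hypothesis: δ(ρ_{W_A W' Y' | W_A ≠ W'}, ρ_{W_A↔W'↔Y' | W_A ≠ W'}) ≤ ε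
    (h : traceDist (cqState Pne ρ) (cqState Pne (fun t => σne t.2)) ≤ ε)
    -- the extended cq-state over (W_A, W', Y) with Y = [W_A = W']
    (P' : 𝒲 × 𝒲 × Bool → ℝ)
    (hP' : ∀ wa w' y, P' (wa, w', y) = if y = decide (wa = w') then P (wa, w') else 0)
    -- its conditional averages given (W', Y)
    (σ' : 𝒲 × Bool → Matrix (Fin d) (Fin d) ℂ)
    (hσ' : ∀ w' y, σ' (w', y) =
      if 0 < ∑ wa, P' (wa, w', y)
      then ((∑ wa, P' (wa, w', y) : ℝ) : ℂ)⁻¹ • ∑ wa, (P' (wa, w', y) : ℂ) • ρ (wa, w')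
      else 0) :
    -- conclusion: δ(ρ_{W_A W' Y Y'}, ρ_{W_A↔(W',Y)↔Y'}) ≤ ε
    traceDist (cqState P' (fun t => ρ (t.1, t.2.1)))
        (cqState P' (fun t => σ' t.2)) ≤ ε := by
  classical
  obtain ⟨hPnn, hPsum⟩ := hP
  have hpne : p ≠ 0 := ne_of_gt hp0
  have hpc : (p : ℂ) ≠ 0 := Complex.ofReal_ne_zero.mpr hpne
  have hPnePos : ∀ wa w', 0 ≤ Pne (wa, w') := by
    intro wa w'; rw [hPne]
    split
    · exact le_rfl
    · exact div_nonneg (hPnn _) hp0.le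
  -- P' at y = false
  have hP'f : ∀ wa w', P' (wa, w', false) = p * Pne (wa, w') := by
    intro wa w'; rw [hP' wa w' false, hPne]
    by_cases hww : wa = w'
    · simp [hww]
    · rw [if_pos (by simp [hww]), if_neg hww, mul_comm, div_mul_cancel₀ _ hpne]
  -- σ' at y = false agrees with σne
  have hσ'f : ∀ w', σ' (w', false) = σne w' := by
    intro w'
    have hsum : ∑ wa, P' (wa, w', false) = p * ∑ wa, Pne (wa, w') := by
      rw [Finset.mul_sum]; exact Finset.sum_congr rfl (fun wa _ => hP'f wa w')
    have hiff : (0 < ∑ wa, P' (wa, w', false)) ↔ (0 < ∑ wa, Pne (wa, w')) := by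
      rw [hsum]
      constructor
      · intro hlt
        by_contra hle
        push_neg at hle
        have h0 : ∑ wa, Pne (wa, w') = 0 :=
          le_antisymm hle (Finset.sum_nonneg fun wa _ => hPnePos wa w')
        rw [h0, mul_zero] at hlt
        exact lt_irrefl _ hlt
      · intro hlt; exact mul_pos hp0 hlt
    rw [hσ' w' false, hσne w']
    by_cases hpos : 0 < ∑ wa, Pne (wa, w')
    · rw [if_pos (hiff.mpr hpos), if_pos hpos, hsum]
      have hsc : ((∑ wa, Pne (wa, w') : ℝ) : ℂ) ≠ 0 :=
        Complex.ofReal_ne_zero.mpr (ne_of_gt hpos)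
      have step : ∀ wa ∈ Finset.univ, ((P' (wa, w', false) : ℝ) : ℂ) • ρ (wa, w')
          = (p : ℂ) • (((Pne (wa, w') : ℝ) : ℂ) • ρ (wa, w')) := by
        intro wa _
        rw [hP'f, smul_smul]
        push_cast
        ring_nf
      rw [Finset.sum_congr rfl step, ← Finset.smul_sum, smul_smul]
      congr 1
      push_cast
      rw [mul_inv, mul_comm ((p : ℂ))⁻¹, mul_assoc, inv_mul_cancel₀ hpc, mul_one]
    · rw [if_neg (fun hh => hpos (hiff.mp hh)), if_neg hpos]
  -- at y = true all blocks vanish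
  have htrue : ∀ wa w' (i j : Fin d),
      ((P' (wa, w', true) : ℝ) : ℂ) * (ρ (wa, w') i j - σ' (w', true) i j) = 0 := by
    intro wa w' i j
    by_cases hww : wa = w'
    · subst hww
      have hsum : ∑ wb, P' (wb, wa, true) = P (wa, wa) := by
        have key : ∀ wb, P' (wb, wa, true) = if wb = wa then P (wb, wa) else 0 := by
          intro wb
          rw [hP' wb wa true]
          by_cases hww' : wb = wa <;> simp [hww']
        rw [Finset.sum_congr rfl (fun wb _ => key wb), Finset.sum_ite_eq' Finset.univ wa]
        simp
      by_cases hpos : 0 < ∑ wb, P' (wb, wa, true)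
      · have hPpos : 0 < P (wa, wa) := hsum ▸ hpos
        have hsum2 : ∑ wb, ((P' (wb, wa, true) : ℝ) : ℂ) • ρ (wb, wa)
            = ((P (wa, wa) : ℝ) : ℂ) • ρ (wa, wa) := by
          have key : ∀ wb, ((P' (wb, wa, true) : ℝ) : ℂ) • ρ (wb, wa)
              = if wb = wa then ((P (wb, wa) : ℝ) : ℂ) • ρ (wb, wa) else 0 := by
            intro wb
            rw [hP' wb wa true]
            by_cases hww' : wb = wa <;> simp [hww']
          rw [Finset.sum_congr rfl (fun wb _ => key wb), Finset.sum_ite_eq' Finset.univ wa]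
          simp
        have hσρ : σ' (wa, true) = ρ (wa, wa) := by
          rw [hσ' wa true, if_pos hpos, hsum2, hsum, smul_smul,
            inv_mul_cancel₀ (Complex.ofReal_ne_zero.mpr (ne_of_gt hPpos)), one_smul]
        rw [hσρ]
        simp
      · have hzero : P' (wa, wa, true) = 0 := by
          have hnn : ∀ wb ∈ Finset.univ, 0 ≤ P' (wb, wa, true) := by
            intro wb _
            show 0 ≤ P' (wb, wa, true)
            rw [hP' wb wa true]
            split
            · exact hPnn _
            · exact le_rfl
          have h1 : P' (wa, wa, true) ≤ ∑ wb, P' (wb, wa, true) :=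
            Finset.single_le_sum hnn (Finset.mem_univ wa)
          have h2 : 0 ≤ P' (wa, wa, true) := hnn wa (Finset.mem_univ wa)
          have h3 : ∑ wb, P' (wb, wa, true) ≤ 0 := not_lt.mp hpos
          linarith
        rw [hzero]
        simp
    · have hzero : P' (wa, w', true) = 0 := by rw [hP' wa w' true]; simp [hww]
      rw [hzero]
      simp
  -- Hermitian structure
  have hρH : ∀ t, (ρ t).IsHermitian := fun t => (hρ t).1.1
  have hσneH : ∀ w', (σne w').IsHermitian := by
    intro w'; rw [hσne w']
    split
    · exact herm_aux (fun wa => Pne (wa, w')) _ (fun wa => ρ (wa, w')) (fun wa => hρH _)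
    · exact Matrix.isHermitian_zero
  have hσ'H : ∀ w' y, (σ' (w', y)).IsHermitian := by
    intro w' y; rw [hσ' w' y]
    split
    · exact herm_aux (fun wa => P' (wa, w', y)) _ (fun wa => ρ (wa, w')) (fun wa => hρH _)
    · exact Matrix.isHermitian_zero
  set N := cqState Pne ρ - cqState Pne (fun t => σne t.2) with hNdef
  have hNH : N.IsHermitian :=
    (cqState_isHermitian _ _ hρH).sub (cqState_isHermitian _ _ (fun t => hσneH t.2))
  set M := cqState P' (fun t : 𝒲 × 𝒲 × Bool => ρ (t.1, t.2.1)) -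
      cqState P' (fun t => σ' t.2) with hMdef
  set e := blockEquiv 𝒲 𝒲 (Fin d) with hedef
  -- block decomposition of M
  have hMblock : M = ((fromBlocks ((p : ℂ) • N) 0 0 0).submatrix e.symm e.symm) := by
    ext ⟨⟨wa, w', y⟩, i⟩ ⟨⟨wb, w'', y'⟩, j⟩
    rw [hMdef, cqState_sub_apply, Matrix.submatrix_apply]
    cases y <;> cases y'
    · -- false, false
      show _ = (fromBlocks ((p : ℂ) • N) 0 0 0) (Sum.inl ((wa, w'), i)) (Sum.inl ((wb, w''), j))
      rw [fromBlocks_apply₁₁, Matrix.smul_apply, hNdef, cqState_sub_apply]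
      by_cases hc : wa = wb ∧ w' = w''
      · obtain ⟨rfl, rfl⟩ := hc
        rw [if_pos rfl, if_pos rfl]
        rw [hP'f, hσ'f, smul_eq_mul]
        push_cast
        ring
      · rw [if_neg (fun hh => hc (by simpa [Prod.ext_iff] using hh)),
          if_neg (fun hh => hc (by simpa [Prod.ext_iff] using hh)), smul_zero]
    · -- false, true
      show _ = (fromBlocks ((p : ℂ) • N) 0 0 0) (Sum.inl ((wa, w'), i)) (Sum.inr ((wb, w''), j))
      rw [fromBlocks_apply₁₂]
      rw [if_neg (by simp [Prod.ext_iff])]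
      simp
    · -- true, false
      show _ = (fromBlocks ((p : ℂ) • N) 0 0 0) (Sum.inr ((wa, w'), i)) (Sum.inl ((wb, w''), j))
      rw [fromBlocks_apply₂₁]
      rw [if_neg (by simp [Prod.ext_iff])]
      simp
    · -- true, true
      show _ = (fromBlocks ((p : ℂ) • N) 0 0 0) (Sum.inr ((wa, w'), i)) (Sum.inr ((wb, w''), j))
      rw [fromBlocks_apply₂₂]
      by_cases hc : wa = wb ∧ w' = w''
      · obtain ⟨rfl, rfl⟩ := hc
        rw [if_pos rfl]
        simpa using htrue wa w' i j
      · rw [if_neg (fun hh => hc (by simpa [Prod.ext_iff] using hh))]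
        simp
  have hMH : M.IsHermitian := by
    rw [Matrix.IsHermitian, hMblock, Matrix.conjTranspose_submatrix, fromBlocks_conjTranspose]
    congr 1
    rw [Matrix.conjTranspose_smul, Complex.star_def, Complex.conj_ofReal, hNH.eq]
    simp
  -- characteristic polynomial of M
  have hUmul : (hNH.eigenvectorUnitary : Matrix ((𝒲 × 𝒲) × Fin d) ((𝒲 × 𝒲) × Fin d) ℂ) *
      star (hNH.eigenvectorUnitary : Matrix ((𝒲 × 𝒲) × Fin d) ((𝒲 × 𝒲) × Fin d) ℂ) = 1 :=
    (Matrix.mem_unitaryGroup_iff).mp hNH.eigenvectorUnitary.2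
  have hpN : (p : ℂ) • N =
      (hNH.eigenvectorUnitary : Matrix ((𝒲 × 𝒲) × Fin d) ((𝒲 × 𝒲) × Fin d) ℂ) *
      diagonal (fun i => (p : ℂ) * ((hNH.eigenvalues i : ℝ) : ℂ)) *
      star (hNH.eigenvectorUnitary : Matrix ((𝒲 × 𝒲) × Fin d) ((𝒲 × 𝒲) × Fin d) ℂ) := by
    conv_lhs => rw [spectral' hNH]
    rw [← smul_mul_assoc, ← mul_smul_comm]
    congr 2
    rw [← Matrix.diagonal_smul]
    rfl
  have hcharM : M.charpoly =
      ∏ k : ((𝒲 × 𝒲) × Fin d) ⊕ ((𝒲 × 𝒲) × Fin d),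
        (X - C (Sum.elim (fun i => (p : ℂ) * ((hNH.eigenvalues i : ℝ) : ℂ)) (fun _ => 0) k)) := by
    rw [hMblock, ← Matrix.reindex_apply, Matrix.charpoly_reindex,
      Matrix.charpoly_fromBlocks_zero₂₁, hpN, charpoly_conj_unitary _ _ hUmul,
      charpoly_diagonal',
      show (0 : Matrix ((𝒲 × 𝒲) × Fin d) ((𝒲 × 𝒲) × Fin d) ℂ)
        = diagonal (fun _ => (0 : ℂ)) by simp,
      charpoly_diagonal', Fintype.prod_sum_type]
    simp only [Sum.elim_inl, Sum.elim_inr]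
  -- eigenvalue sum comparison
  have hMsum : ∑ k, |hMH.eigenvalues k| = p * ∑ i, |hNH.eigenvalues i| := by
    rw [sum_abs_eigen hMH, hcharM, roots_sum, Fintype.sum_sum_type]
    have h1 : ∀ i : (𝒲 × 𝒲) × Fin d,
        |((p : ℂ) * ((hNH.eigenvalues i : ℝ) : ℂ)).re| = p * |hNH.eigenvalues i| := by
      intro i
      rw [← Complex.ofReal_mul, Complex.ofReal_re, abs_mul, abs_of_nonneg hp0.le]
    simp only [Sum.elim_inl, Sum.elim_inr, Complex.zero_re, abs_zero, Finset.sum_const_zero,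
      add_zero, h1]
    rw [← Finset.mul_sum]
  -- wrap up
  have hNle : (1 / 2) * ∑ i, |hNH.eigenvalues i| ≤ ε := by
    unfold traceDist at h
    rwa [dif_pos hNH] at h
  have hsumnn : 0 ≤ ∑ i, |hNH.eigenvalues i| := Finset.sum_nonneg fun _ _ => abs_nonneg _
  have hp1 : p ≤ 1 := by
    rw [hp]
    calc (∑ t : 𝒲 × 𝒲, if t.1 = t.2 then 0 else P t) ≤ ∑ t, P t :=
          Finset.sum_le_sum (fun t _ => by split <;> [exact hPnn t; exact le_rfl])
      _ = 1 := hPsum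
  unfold traceDist
  rw [dif_pos hMH, hMsum]
  calc (1 / 2) * (p * ∑ i, |hNH.eigenvalues i|)
      = p * ((1 / 2) * ∑ i, |hNH.eigenvalues i|) := by ring
    _ ≤ 1 * ε := mul_le_mul hp1 hNle (by positivity) zero_le_one
    _ = ε := one_mul ε
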